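/- arXiv:2306.07360 — 4 statements merged into one kernel-verified Lean document; each statement's English description precedes it below -/
import Mathlib

section
/- Let L be a complete modular lattice and 𝔪 a submonoid with zero of End_lin(L) that contains all the projections. Then L is 𝔪-Rickart if and only if L is 𝔪-K-extending and 𝔪-K-nonsingular. -/
section Preamble

variable {α β : Type*}

/-- A linear morphism between complete lattices: there is a kernel element `k` such that
`φ x = φ (x ⊔ k)` for all `x`, and `φ` restricts to an isomorphism of (complete) lattices
from the interval `[k, ⊤]` onto `[⊥, φ ⊤]`. -/
def IsLinMor [CompleteLattice α] [CompleteLattice β] (φ : α → β) : Prop :=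
  ∃ k : α, (∀ x, φ x = φ (x ⊔ k)) ∧
    ∃ e : Set.Icc k (⊤ : α) ≃o Set.Icc (⊥ : β) (φ ⊤),
      ∀ x : Set.Icc k (⊤ : α), (e x : β) = φ (x : α)

/-- The kernel of a linear morphism: the largest element sent to `⊥`. -/
noncomputable def linKer [CompleteLattice α] [CompleteLattice β] (φ : α → β) : α :=
  sSup {a | φ a = ⊥}

/-- A submonoid with zero of the monoid of linear endomorphisms of `α`. -/
structure IsLinSubmonoid [CompleteLattice α] (M : Set (α → α)) : Prop where
  lin_mem : ∀ φ ∈ M, IsLinMor φ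
  id_mem : (id : α → α) ∈ M
  zero_mem : (fun _ : α => (⊥ : α)) ∈ M
  comp_mem : ∀ φ ∈ M, ∀ ψ ∈ M, φ ∘ ψ ∈ M

/-- The projection onto `x` along a complement `x'`. -/
def proj [CompleteLattice α] (x x' : α) : α → α := fun a => (a ⊔ x') ⊓ x

/-- `M` is closed under complements: whenever `φ ∈ M` restricts to a linear isomorphism
`[⊥, x] → [⊥, y]` with `x, y` complemented, the composite `ι_x ∘ (φ|_x)⁻¹ ∘ π_y` is in `M`. -/
def ClosedUnderComplements [CompleteLattice α] (M : Set (α → α)) : Prop :=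
  ∀ φ ∈ M, ∀ x x' y y' : α, IsCompl x x' → IsCompl y y' →
    ∀ e : Set.Icc (⊥ : α) x ≃o Set.Icc (⊥ : α) y,
      (∀ a : Set.Icc (⊥ : α) x, ((e a : Set.Icc (⊥ : α) y) : α) = φ (a : α)) →
      (fun a : α =>
        ((e.symm ⟨(a ⊔ y') ⊓ y, bot_le, inf_le_right⟩ : Set.Icc (⊥ : α) x) : α)) ∈ M

/-- `L` is `M`-endoregular: `M` is a regular monoid. -/
def MEndoregular [CompleteLattice α] (M : Set (α → α)) : Prop :=
  ∀ φ ∈ M, ∃ ψ ∈ M, φ ∘ ψ ∘ φ = φ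

/-- `L` is `M`-Rickart: kernels of members of `M` have complements. -/
def MRickart [CompleteLattice α] (M : Set (α → α)) : Prop :=
  ∀ φ ∈ M, ∃ y, IsCompl (linKer φ) y

/-- `L` is dual-`M`-Rickart: images of members of `M` have complements. -/
def MDualRickart [CompleteLattice α] (M : Set (α → α)) : Prop :=
  ∀ φ ∈ M, ∃ y, IsCompl (φ ⊤) y

/-- The `M`-C2 condition. -/
def MC2 [CompleteLattice α] (M : Set (α → α)) : Prop :=
  ∀ a x x' : α, IsCompl x x' →
    ∀ e : Set.Icc (⊥ : α) x ≃o Set.Icc (⊥ : α) a,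
      ((fun b : α =>
          ((e ⟨(b ⊔ x') ⊓ x, bot_le, inf_le_right⟩ : Set.Icc (⊥ : α) a) : α)) ∈ M) →
      ∃ a', IsCompl a a'

/-- The `M`-D2 condition. -/
def MD2 [CompleteLattice α] (M : Set (α → α)) : Prop :=
  ∀ a x : α, (∃ x', IsCompl x x') →
    ∀ e : Set.Icc a (⊤ : α) ≃o Set.Icc (⊥ : α) x,
      ((fun b : α => ((e ⟨a ⊔ b, le_sup_left, le_top⟩ : Set.Icc (⊥ : α) x) : α)) ∈ M) →
      ∃ a', IsCompl a a'

/-- `L` is `M`-abelian: every idempotent of `M` is central in `M`. -/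
def MAbelian [CompleteLattice α] (M : Set (α → α)) : Prop :=
  ∀ ε ∈ M, ε ∘ ε = ε → ∀ φ ∈ M, ε ∘ φ = φ ∘ ε

/-- `a` is `M`-`L`-generated: it is a join of images of linear morphisms `L → [⊥, a]`
whose composites with the inclusion `ι_a` lie in `M`. -/
def MGenerated [CompleteLattice α] (M : Set (α → α)) (a : α) : Prop :=
  ∃ S : Set (α → α), S ⊆ M ∧ (∀ f ∈ S, ∀ x, f x ≤ a) ∧ (⨆ f ∈ S, f ⊤) = a

/-- A complete lattice is compact if every join representation of `⊤` has a finite subjoin. -/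
def CompactLat (α : Type*) [CompleteLattice α] : Prop :=
  ∀ s : Set α, sSup s = ⊤ → ∃ t : Finset α, ↑t ⊆ s ∧ sSup (↑t : Set α) = ⊤

/-- An element `c` is compact if the interval `[⊥, c]` is a compact lattice. -/
def CompactElt [CompleteLattice α] (c : α) : Prop :=
  ∀ s : Set α, (∀ a ∈ s, a ≤ c) → sSup s = c →
    ∃ t : Finset α, ↑t ⊆ s ∧ sSup (↑t : Set α) = c

/-- `x` is essential in `L`. -/
def Essential [CompleteLattice α] (x : α) : Prop := ∀ y, x ⊓ y = ⊥ → y = ⊥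

/-- `x` is essential in the interval `[⊥, c]`. -/
def EssentialIn [CompleteLattice α] (x c : α) : Prop :=
  x ≤ c ∧ ∀ y ≤ c, x ⊓ y = ⊥ → y = ⊥

/-- `x` is superfluous in `L`. -/
def Superfluous [CompleteLattice α] (x : α) : Prop := ∀ y, x ⊔ y = ⊤ → y = ⊤

/-- `x` is superfluous in the interval `[⊥, c]`. -/
def SuperfluousIn [CompleteLattice α] (x c : α) : Prop :=
  x ≤ c ∧ ∀ y ≤ c, x ⊔ y = c → y = c

/-- `M` contains all the projections. -/
def ContainsProjections [CompleteLattice α] (M : Set (α → α)) : Prop :=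
  ∀ x x' : α, IsCompl x x' → proj x x' ∈ M

/-- `L` is `M`-K-extending. -/
def MKExtending [CompleteLattice α] (M : Set (α → α)) : Prop :=
  ∀ φ ∈ M, ∃ c : α, (∃ c', IsCompl c c') ∧ EssentialIn (linKer φ) c

/-- `L` is `M`-K-nonsingular. -/
def MKNonsingular [CompleteLattice α] (M : Set (α → α)) : Prop :=
  ∀ φ ∈ M, Essential (linKer φ) → φ = fun _ => (⊥ : α)

/-- `L` is `M`-T-lifting. -/
def MTLifting [CompleteLattice α] (M : Set (α → α)) : Prop :=
  ∀ φ ∈ M, ∃ c c' : α, IsCompl c c' ∧ c ≤ φ ⊤ ∧ SuperfluousIn (φ ⊤ ⊓ c') c'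

end Preamble

private lemma linMor_ker {α β : Type*} [CompleteLattice α] [CompleteLattice β]
    {φ : α → β} (h : IsLinMor φ) :
    φ (linKer φ) = ⊥ ∧ (∀ a, φ a = ⊥ → a ≤ linKer φ) ∧ (∀ a, φ a = φ (a ⊔ linKer φ)) := by
  obtain ⟨k, hk, e, he⟩ := h
  have hbk : φ k = ⊥ := by
    have h1 : e ⟨k, le_rfl, le_top⟩ ≤ ⟨⊥, le_rfl, bot_le⟩ := by
      rw [← e.apply_symm_apply (⟨⊥, le_rfl, bot_le⟩ : Set.Icc (⊥:β) (φ ⊤))]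
      exact e.monotone (e.symm _).2.1
    have h2 : (e ⟨k, le_rfl, le_top⟩ : β) ≤ ⊥ := h1
    rw [he] at h2
    exact le_bot_iff.mp h2
  have hle : ∀ a, φ a = ⊥ → a ≤ k := by
    intro a ha
    have hak : φ (a ⊔ k) = ⊥ := by rw [← hk]; exact ha
    have : e ⟨a ⊔ k, le_sup_right, le_top⟩ = e ⟨k, le_rfl, le_top⟩ := by
      apply Subtype.ext
      rw [he, he]
      simp only [hak, hbk]
    have := e.injective this
    have : a ⊔ k = k := congrArg Subtype.val this
    exact sup_eq_right.mp this
  have hker : linKer φ = k := le_antisymm (sSup_le fun a ha => hle a ha) (le_sSup hbk)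
  rw [hker]
  exact ⟨hbk, hle, hk⟩

private lemma ess_sup_compl {α : Type*} [CompleteLattice α] [IsModularLattice α]
    {k c c' : α} (hcc : IsCompl c c') (hk : EssentialIn k c) : Essential (k ⊔ c') := by
  intro y hy
  have hc'y : (c' ⊔ y) ⊓ (k ⊔ c') = c' := by
    rw [sup_inf_assoc_of_le y (le_sup_right : c' ≤ k ⊔ c'), inf_comm y, hy, sup_bot_eq]
  have hkz : k ⊓ ((c' ⊔ y) ⊓ c) = ⊥ := by
    have h1 : k ⊓ ((c' ⊔ y) ⊓ c) ≤ c' := by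
      calc k ⊓ ((c' ⊔ y) ⊓ c) ≤ (k ⊔ c') ⊓ (c' ⊔ y) :=
            le_inf (le_trans inf_le_left le_sup_left) (le_trans inf_le_right inf_le_left)
        _ = c' := by rw [inf_comm]; exact hc'y
    have h2 : k ⊓ ((c' ⊔ y) ⊓ c) ≤ c := le_trans inf_le_right inf_le_right
    exact le_bot_iff.mp (le_trans (le_inf h2 h1) hcc.inf_eq_bot.le)
  have hz : (c' ⊔ y) ⊓ c = ⊥ := hk.2 _ inf_le_right hkz
  have hyc' : y ≤ c' := by
    have h3 : (c' ⊔ c) ⊓ (c' ⊔ y) = c' ⊔ (c ⊓ (c' ⊔ y)) :=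
      sup_inf_assoc_of_le c (le_sup_left : c' ≤ c' ⊔ y)
    rw [sup_comm c' c, hcc.sup_eq_top, top_inf_eq, inf_comm c, hz, sup_bot_eq] at h3
    exact le_trans le_sup_right h3.le
  have : y ≤ k ⊔ c' := le_trans hyc' le_sup_right
  rw [inf_eq_right.mpr this] at hy
  exact hy

/-- If `M` contains all the projections, then `L` is `M`-Rickart iff `L` is
`M`-K-extending and `M`-K-nonsingular. -/
theorem stmt_15 {α : Type*} [CompleteLattice α] [IsModularLattice α]
    (M : Set (α → α)) (hM : IsLinSubmonoid M) (hproj : ContainsProjections M) :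
    MRickart M ↔ MKExtending M ∧ MKNonsingular M := by
  constructor
  · intro hR
    constructor
    · intro φ hφ
      obtain ⟨y, hy⟩ := hR φ hφ
      refine ⟨linKer φ, ⟨y, hy⟩, le_rfl, fun z hz hiz => ?_⟩
      rwa [inf_eq_right.mpr hz] at hiz
    · intro φ hφ hess
      obtain ⟨y, hy⟩ := hR φ hφ
      have hy0 : y = ⊥ := hess y (hy.inf_eq_bot)
      have hktop : linKer φ = ⊤ := by
        have := hy.sup_eq_top
        rwa [hy0, sup_bot_eq] at this
      obtain ⟨hφk, _, hφsup⟩ := linMor_ker (hM.lin_mem φ hφ)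
      funext a
      rw [hφsup a, hktop, sup_top_eq, ← sup_top_eq (⊥ : α), ← hktop, bot_sup_eq]
      exact hφk
  · rintro ⟨hE, hN⟩ φ hφ
    obtain ⟨c, ⟨c', hcc⟩, hkc, hkess⟩ := hE φ hφ
    set k := linKer φ with hk
    have hψmem : φ ∘ proj c c' ∈ M := hM.comp_mem φ hφ _ (hproj c c' hcc)
    obtain ⟨hφk, hφle, _⟩ := linMor_ker (hM.lin_mem φ hφ)
    have hψk : (φ ∘ proj c c') (k ⊔ c') = ⊥ := by
      show φ ((k ⊔ c' ⊔ c') ⊓ c) = ⊥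
      rw [sup_assoc, sup_idem, sup_inf_assoc_of_le c' hkc, hcc.symm.inf_eq_bot,
        sup_bot_eq]
      exact hφk
    have hkerψ : k ⊔ c' ≤ linKer (φ ∘ proj c c') := le_sSup hψk
    have hessψ : Essential (linKer (φ ∘ proj c c')) := by
      intro y hy
      exact ess_sup_compl hcc ⟨hkc, hkess⟩ y
        (le_bot_iff.mp (le_trans (inf_le_inf_right y hkerψ) hy.le))
    have hψ0 := hN _ hψmem hessψ
    have hφc : φ c = ⊥ := by
      have := congrFun hψ0 ⊤
      simpa [proj] using this
    have : c ≤ k := hφle c hφc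
    have hck : k = c := le_antisymm hkc this
    exact ⟨c', hck ▸ hcc⟩
end

section
/- Let L be a complete modular lattice and φ : L → L a linear morphism. (1) If x ∈ L is essential in L, then w = ⨆{a ∈ L : φ(a) ≤ x} is essential in L. (2) If x ∈ L is superfluous in L, then φ(x) is superfluous in L. -/
/-- For a linear endomorphism `φ` of a complete modular lattice:
(1) if `x` is essential then `⨆ {a | φ a ≤ x}` is essential;
(2) if `x` is superfluous then `φ x` is superfluous. -/
theorem stmt_16 {α : Type*} [CompleteLattice α] [IsModularLattice α]
    (φ : α → α) (hφ : IsLinMor φ) :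
    (∀ x : α, Essential x → Essential (sSup {a : α | φ a ≤ x})) ∧
    (∀ x : α, Superfluous x → Superfluous (φ x)) := by
  obtain ⟨k, hk, e, he⟩ := hφ
  -- φ is monotone
  have hmono : Monotone φ := by
    intro a b hab
    rw [hk a, hk b, ← he ⟨a ⊔ k, le_sup_right, le_top⟩, ← he ⟨b ⊔ k, le_sup_right, le_top⟩]
    exact Subtype.coe_le_coe.mpr (e.monotone (Subtype.mk_le_mk.mpr (sup_le_sup_right hab k)))
  -- φ k = ⊥
  have hφk : φ k = ⊥ := by
    have h1 : (⟨k, le_rfl, le_top⟩ : Set.Icc k (⊤ : α)) ≤ e.symm ⟨⊥, le_rfl, bot_le⟩ :=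
      Subtype.mk_le_mk.mpr (e.symm ⟨⊥, le_rfl, bot_le⟩).2.1
    have h2 := e.monotone h1
    rw [e.apply_symm_apply] at h2
    have h3 : (e ⟨k, le_rfl, le_top⟩ : α) ≤ ⊥ := Subtype.coe_le_coe.mpr h2
    rw [he] at h3
    exact le_bot_iff.mp h3
  -- order reflection on [k, ⊤]
  have hrefl : ∀ a b : α, k ≤ a → k ≤ b → φ a ≤ φ b → a ≤ b := by
    intro a b ha hb h
    rw [← he ⟨a, ha, le_top⟩, ← he ⟨b, hb, le_top⟩] at h
    exact Subtype.mk_le_mk.mp (e.le_iff_le.mp (Subtype.coe_le_coe.mp h))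
  -- surjectivity onto [⊥, φ ⊤]
  have hsurj : ∀ c : α, c ≤ φ ⊤ → ∃ b : α, k ≤ b ∧ φ b = c := by
    intro c hc
    refine ⟨(e.symm ⟨c, bot_le, hc⟩ : Set.Icc k (⊤ : α)), (e.symm ⟨c, bot_le, hc⟩).2.1, ?_⟩
    have h1 := he (e.symm ⟨c, bot_le, hc⟩)
    rw [e.apply_symm_apply] at h1
    exact h1.symm
  constructor
  · -- (1) essential
    intro x hx
    -- build w₀ = preimage of x ⊓ φ⊤
    obtain ⟨w, hkw, hφw⟩ := hsurj (x ⊓ φ ⊤) inf_le_right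
    have hwS : sSup {a : α | φ a ≤ x} = w := by
      apply le_antisymm
      · apply sSup_le
        intro a ha
        have h1 : φ (a ⊔ k) ≤ x ⊓ φ ⊤ :=
          le_inf (by rw [← hk a]; exact ha) (hmono le_top)
        rw [← hφw] at h1
        exact le_trans le_sup_left (hrefl (a ⊔ k) w le_sup_right hkw h1)
      · exact le_sSup (by rw [Set.mem_setOf_eq, hφw]; exact inf_le_left)
    rw [hwS]
    intro y hy
    -- z = k ⊔ y satisfies z ⊓ w = k by modularity
    have hzw : (k ⊔ y) ⊓ w = k := by
      rw [sup_inf_assoc_of_le y hkw, inf_comm y w, hy, sup_bot_eq]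
    -- show x ⊓ φ (k ⊔ y) = ⊥
    have hc : x ⊓ φ (k ⊔ y) = ⊥ := by
      have hcle : x ⊓ φ (k ⊔ y) ≤ φ ⊤ := le_trans inf_le_right (hmono le_top)
      obtain ⟨c, hkc, hφc⟩ := hsurj (x ⊓ φ (k ⊔ y)) hcle
      have hc1 : c ≤ w := hrefl c w hkc hkw (by
        rw [hφc, hφw]
        exact le_inf inf_le_left hcle)
      have hc2 : c ≤ k ⊔ y := hrefl c (k ⊔ y) hkc le_sup_left (by
        rw [hφc]; exact inf_le_right)
      have hck : c ≤ k := by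
        calc c ≤ (k ⊔ y) ⊓ w := le_inf hc2 hc1
        _ = k := hzw
      have := hmono hck
      rw [hφc, hφk] at this
      exact le_bot_iff.mp this
    have hφz : φ (k ⊔ y) = ⊥ := hx _ hc
    -- hence k ⊔ y ≤ w, so y ≤ k
    have hzle : k ⊔ y ≤ w := by
      apply hrefl _ _ le_sup_left hkw
      rw [hφz, hφw]; exact bot_le
    have hyk : y ≤ k := by
      have : k ⊔ y ≤ (k ⊔ y) ⊓ w := le_inf le_rfl hzle
      rw [hzw] at this
      exact le_trans le_sup_right this
    have : w ⊓ y = y := inf_eq_right.mpr (le_trans hyk hkw)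
    rw [this] at hy
    exact hy
  · -- (2) superfluous
    intro x hx y hy
    have hφx : φ x ≤ φ ⊤ := hmono le_top
    have h1 : φ x ⊔ y ⊓ φ ⊤ = φ ⊤ := by
      rw [← sup_inf_assoc_of_le y hφx, hy, top_inf_eq]
    obtain ⟨b, hkb, hφb⟩ := hsurj (y ⊓ φ ⊤) inf_le_right
    have h2 : φ (x ⊔ k ⊔ b) = φ ⊤ := by
      apply le_antisymm (hmono le_top)
      rw [← h1]
      apply sup_le
      · rw [hk x]; exact hmono le_sup_left
      · rw [← hφb]; exact hmono le_sup_right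
    have h3 : x ⊔ k ⊔ b = ⊤ :=
      le_antisymm le_top (hrefl ⊤ (x ⊔ k ⊔ b) le_top
        (le_trans le_sup_right le_sup_left) (le_of_eq h2.symm))
    have h4 : k ⊔ b = ⊤ := hx (k ⊔ b) (by rw [← sup_assoc]; exact h3)
    have hb : b = ⊤ := by rw [← h4, sup_eq_right.mpr hkb]
    have h5 : φ ⊤ ≤ y := by
      rw [← hb, hφb]; exact inf_le_left
    rw [sup_eq_right.mpr (le_trans hφx h5)] at hy
    exact hy
end

section
/- Let L be a complete modular lattice and 𝔪 a submonoid with zero of End_lin(L) that is closed under complements. If L is 𝔪-K-extending and satisfies the 𝔪-C2 condition, then the quotient monoid 𝔪/≡_Δ is regular; concretely, for every φ ∈ 𝔪 there exist ψ ∈ 𝔪 and an essential element x ∈ L such that (φ ∘ ψ ∘ φ)(y) = φ(y) for all y ≤ x. -/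
section Aux

variable {α : Type*} [CompleteLattice α] [IsModularLattice α]

lemma ess_of_compl {k c c' : α} (hcompl : IsCompl c c') (hk : k ≤ c)
    (hess : ∀ y ≤ c, k ⊓ y = ⊥ → y = ⊥) : Essential (k ⊔ c') := by
  intro w hw
  have hkc' : k ⊓ c' = ⊥ :=
    le_bot_iff.mp (le_trans (inf_le_inf_right c' hk) hcompl.inf_eq_bot.le)
  -- step 1: k ⊓ (c' ⊔ w) = ⊥
  have hmod1 : (c' ⊔ w) ⊓ (k ⊔ c') = c' ⊔ w ⊓ (k ⊔ c') :=
    sup_inf_assoc_of_le w le_sup_right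
  have h1 : k ⊓ (c' ⊔ w) = ⊥ := by
    have hle : k ⊓ (c' ⊔ w) ≤ c' := by
      calc k ⊓ (c' ⊔ w) ≤ (c' ⊔ w) ⊓ (k ⊔ c') :=
            le_inf inf_le_right (inf_le_left.trans le_sup_left)
        _ = c' ⊔ w ⊓ (k ⊔ c') := hmod1
        _ = c' := by rw [inf_comm, hw, sup_bot_eq]
    have : k ⊓ (c' ⊔ w) ≤ k ⊓ c' := le_inf inf_le_left hle
    exact le_bot_iff.mp (hkc' ▸ this)
  -- step 2: c ⊓ (c' ⊔ w) = ⊥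
  have h2 : c ⊓ (c' ⊔ w) = ⊥ := by
    refine hess _ inf_le_left ?_
    have : k ⊓ (c ⊓ (c' ⊔ w)) = k ⊓ (c' ⊔ w) := by
      rw [← inf_assoc, inf_eq_left.mpr hk]
    rw [this, h1]
  -- step 3: w ≤ c'
  have h3 : c' ⊔ w = c' := by
    have h4 : (c' ⊔ c) ⊓ (c' ⊔ w) = c' ⊔ c ⊓ (c' ⊔ w) := sup_inf_assoc_of_le c le_sup_left
    rw [sup_comm c' c, hcompl.sup_eq_top, top_inf_eq, h2, sup_bot_eq] at h4
    exact h4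
  have hwc' : w ≤ c' := le_sup_right.trans h3.le
  have : w ≤ (k ⊔ c') ⊓ w := le_inf (hwc'.trans le_sup_right) le_rfl
  exact le_bot_iff.mp (hw ▸ this)

end Aux

/-- If `L` is `M`-K-extending and satisfies `M`-C2, then `M/≡_Δ` is a regular
monoid: for every `φ ∈ M` there exist `ψ ∈ M` and an essential `x` with
`(φ ∘ ψ ∘ φ) y = φ y` for all `y ≤ x`. -/
theorem stmt_18 {α : Type*} [CompleteLattice α] [IsModularLattice α]
    (M : Set (α → α)) (hM : IsLinSubmonoid M) (hcc : ClosedUnderComplements M)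
    (hke : MKExtending M) (hc2 : MC2 M) :
    ∀ φ ∈ M, ∃ ψ ∈ M, ∃ x : α, Essential x ∧ ∀ y ≤ x, φ (ψ (φ y)) = φ y := by
  intro φ hφ
  obtain ⟨k, hk, e, he⟩ := hM.lin_mem φ hφ
  -- φ is monotone
  have hmono : Monotone φ := by
    intro x y hxy
    rw [hk x, hk y]
    have : (⟨x ⊔ k, le_sup_right, le_top⟩ : Set.Icc k (⊤ : α)) ≤ ⟨y ⊔ k, le_sup_right, le_top⟩ :=
      sup_le_sup_right hxy k
    have := e.monotone this
    rw [← he ⟨x ⊔ k, le_sup_right, le_top⟩, ← he ⟨y ⊔ k, le_sup_right, le_top⟩]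
    exact this
  -- φ k = ⊥
  have hφk : φ k = ⊥ := by
    have hle : (⟨k, le_rfl, le_top⟩ : Set.Icc k (⊤ : α)) ≤ e.symm ⟨⊥, le_rfl, bot_le⟩ :=
      (e.symm ⟨⊥, le_rfl, bot_le⟩).2.1
    have h1 := e.monotone hle
    rw [e.apply_symm_apply] at h1
    have h2 : (e ⟨k, le_rfl, le_top⟩ : α) ≤ (⊥ : α) := h1
    rw [he ⟨k, le_rfl, le_top⟩] at h2
    exact le_bot_iff.mp h2
  -- linKer φ = k
  have hker : linKer φ = k := by
    refine le_antisymm (sSup_le ?_) (le_sSup hφk)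
    intro a ha
    have h1 : φ (a ⊔ k) = ⊥ := by rw [← hk a]; exact ha
    have h2 : φ k = φ (k ⊔ k) := hk k
    have e1 : (e ⟨a ⊔ k, le_sup_right, le_top⟩ : α) = (e ⟨k, le_rfl, le_top⟩ : α) := by
      rw [he, he, h1, hφk]
    have e2 : (⟨a ⊔ k, le_sup_right, le_top⟩ : Set.Icc k (⊤ : α)) = ⟨k, le_rfl, le_top⟩ :=
      e.injective (Subtype.ext e1)
    have : a ⊔ k = k := congrArg Subtype.val e2
    exact le_of_sup_eq this
  obtain ⟨c, ⟨c', hcompl⟩, hkle, hess⟩ := hke φ hφ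
  rw [hker] at hkle hess
  have hcompl' : IsCompl c' c := hcompl.symm
  have hkc' : k ⊓ c' = ⊥ :=
    le_bot_iff.mp (le_trans (inf_le_inf_right c' hkle) hcompl.inf_eq_bot.le)
  -- the order iso e' : [⊥, c'] ≃o [⊥, φ c']
  have hsub : ∀ z : α, z ≤ c' → φ z ≤ φ c' := fun z hz => hmono hz
  have hbd : ∀ b : α, b ≤ φ c' → b ≤ φ ⊤ := fun b hb => hb.trans (hmono le_top)
  let F : Set.Icc (⊥ : α) c' → Set.Icc (⊥ : α) (φ c') :=
    fun z => ⟨φ z, bot_le, hsub z z.2.2⟩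
  let G : Set.Icc (⊥ : α) (φ c') → Set.Icc (⊥ : α) c' :=
    fun b => ⟨(e.symm ⟨b, bot_le, hbd b b.2.2⟩ : α) ⊓ c', bot_le, inf_le_right⟩
  have keyF : ∀ z : Set.Icc (⊥ : α) c',
      (e ⟨(z : α) ⊔ k, le_sup_right, le_top⟩ : α) = φ (z : α) := by
    intro z
    rw [he ⟨(z : α) ⊔ k, le_sup_right, le_top⟩, ← hk]
  have hGF : Function.LeftInverse G F := by
    intro z
    apply Subtype.ext
    show (e.symm ⟨φ (z : α), bot_le, hbd _ (hsub _ z.2.2)⟩ : α) ⊓ c' = (z : α)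
    have h1 : (⟨φ (z : α), bot_le, hbd _ (hsub _ z.2.2)⟩ : Set.Icc (⊥ : α) (φ ⊤)) =
        e ⟨(z : α) ⊔ k, le_sup_right, le_top⟩ := Subtype.ext (keyF z).symm
    rw [h1, e.symm_apply_apply]
    show ((z : α) ⊔ k) ⊓ c' = (z : α)
    rw [sup_inf_assoc_of_le _ z.2.2, hkc', sup_bot_eq]
  have hFG : Function.RightInverse G F := by
    intro b
    apply Subtype.ext
    show φ ((e.symm ⟨(b : α), bot_le, hbd _ b.2.2⟩ : α) ⊓ c') = (b : α)
    set w : Set.Icc k (⊤ : α) := e.symm ⟨(b : α), bot_le, hbd _ b.2.2⟩ with hw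
    have hwk : k ≤ (w : α) := w.2.1
    have hwle : (w : α) ≤ c' ⊔ k := by
      have hb1 : (⟨(b : α), bot_le, hbd _ b.2.2⟩ : Set.Icc (⊥ : α) (φ ⊤)) ≤
          ⟨φ c', bot_le, hmono le_top⟩ := b.2.2
      have hb2 : (⟨φ c', bot_le, hmono le_top⟩ : Set.Icc (⊥ : α) (φ ⊤)) =
          e ⟨c' ⊔ k, le_sup_right, le_top⟩ := by
        apply Subtype.ext
        rw [he ⟨c' ⊔ k, le_sup_right, le_top⟩, ← hk]
      rw [hb2] at hb1
      have := e.symm.monotone hb1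
      rw [e.symm_apply_apply] at this
      exact this
    have h1 : ((w : α) ⊓ c') ⊔ k = (w : α) := by
      rw [inf_sup_assoc_of_le _ hwk, sup_comm c' k, inf_eq_left.mpr (by rwa [sup_comm k c'])]
    calc φ ((w : α) ⊓ c') = φ (((w : α) ⊓ c') ⊔ k) := hk _
      _ = φ (w : α) := by rw [h1]
      _ = (e w : α) := (he w).symm
      _ = (b : α) := by rw [hw, e.apply_symm_apply]
  have hFmono : Monotone F := fun x y h => hmono h
  have hGmono : Monotone G := by
    intro x y h
    have : (⟨(x : α), bot_le, hbd _ x.2.2⟩ : Set.Icc (⊥ : α) (φ ⊤)) ≤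
        ⟨(y : α), bot_le, hbd _ y.2.2⟩ := h
    exact inf_le_inf_right c' (e.symm.monotone this)
  let E : Set.Icc (⊥ : α) c' ≃ Set.Icc (⊥ : α) (φ c') :=
    ⟨F, G, hGF, hFG⟩
  let e' : Set.Icc (⊥ : α) c' ≃o Set.Icc (⊥ : α) (φ c') := E.toOrderIso hFmono hGmono
  have he' : ∀ z : Set.Icc (⊥ : α) c', ((e' z : Set.Icc (⊥ : α) (φ c')) : α) = φ (z : α) :=
    fun z => rfl
  have he'symm : ∀ b, e'.symm b = G b := fun b => rfl
  -- projections belong to M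
  have hproj : (fun a : α => (a ⊔ c) ⊓ c') ∈ M := by
    have := hcc id hM.id_mem c' c c' c hcompl' hcompl' (OrderIso.refl _) (fun a => rfl)
    exact this
  have hφproj : (fun b : α => φ ((b ⊔ c) ⊓ c')) ∈ M :=
    hM.comp_mem φ hφ _ hproj
  -- φ c' is complemented by M-C2
  obtain ⟨a', hcompla⟩ := hc2 (φ c') c' c hcompl' e' hφproj
  -- ψ belongs to M
  have hψ := hcc φ hφ c' c (φ c') a' hcompl' hcompla e' he'
  refine ⟨_, hψ, k ⊔ c', ess_of_compl hcompl hkle hess, ?_⟩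
  intro y hy
  set z : α := (y ⊔ k) ⊓ c' with hzdef
  have hzc' : z ≤ c' := inf_le_right
  have hzk : z ⊔ k = y ⊔ k := by
    rw [hzdef, inf_sup_assoc_of_le _ (le_sup_right : k ≤ y ⊔ k)]
    exact inf_eq_left.mpr (sup_le (hy.trans (sup_comm k c' ▸ le_rfl)) le_sup_right)
  have hφyz : φ y = φ z := by rw [hk y, hk z, hzk]
  have hφzle : φ z ≤ φ c' := hmono hzc'
  have harg : (φ y ⊔ a') ⊓ φ c' = φ z := by
    rw [hφyz, sup_inf_assoc_of_le _ hφzle, hcompla.symm.inf_eq_bot, sup_bot_eq]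
  have hsub1 : (⟨(φ y ⊔ a') ⊓ φ c', bot_le, inf_le_right⟩ : Set.Icc (⊥ : α) (φ c')) =
      e' ⟨z, bot_le, hzc'⟩ := by
    apply Subtype.ext
    rw [he' ⟨z, bot_le, hzc'⟩]
    exact harg
  show φ ((e'.symm ⟨(φ y ⊔ a') ⊓ φ c', bot_le, inf_le_right⟩ : Set.Icc (⊥ : α) c') : α) = φ y
  rw [hsub1, e'.symm_apply_apply]
  exact hφyz.symm
end

section
/- Let L be a complete modular lattice and 𝔪 a submonoid with zero of End_lin(L) that is closed under complements. If L is 𝔪-T-lifting and satisfies the 𝔪-D2 condition, then the quotient monoid 𝔪/≡^∇ is regular; concretely, for every φ ∈ 𝔪 there exist ψ ∈ 𝔪 and a superfluous element x ∈ L such that (φ ∘ ψ ∘ φ)(a) ⊔ x = φ(a) ⊔ x for all a ∈ L. -/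
/-- If `L` is `M`-T-lifting and satisfies `M`-D2, then `M/≡^∇` is a regular
monoid: for every `φ ∈ M` there exist `ψ ∈ M` and a superfluous `x` with
`(φ ∘ ψ ∘ φ) a ⊔ x = φ a ⊔ x` for all `a`. -/
theorem stmt_19 {α : Type*} [CompleteLattice α] [IsModularLattice α]
    (M : Set (α → α)) (hM : IsLinSubmonoid M) (hcc : ClosedUnderComplements M)
    (htl : MTLifting M) (hd2 : MD2 M) :
    ∀ φ ∈ M, ∃ ψ ∈ M, ∃ x : α, Superfluous x ∧ ∀ a : α, φ (ψ (φ a)) ⊔ x = φ a ⊔ x := by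
  intro φ hφ
  obtain ⟨k, hk, e, he⟩ := hM.lin_mem φ hφ
  have himg : ∀ t, φ t ≤ φ ⊤ := fun t => by
    rw [hk t, ← he ⟨t ⊔ k, le_sup_right, le_top⟩]
    exact (e ⟨t ⊔ k, le_sup_right, le_top⟩).2.2
  obtain ⟨c, c', hcompl, hcle, hsupin⟩ := htl φ hφ
  set x : α := φ ⊤ ⊓ c' with hxdef
  have hxle : x ≤ c' := inf_le_right
  -- projections are in M
  have hproj : (fun a : α => (a ⊔ c') ⊓ c) ∈ M := by
    have h := hcc id hM.id_mem c c' c c' hcompl hcompl (OrderIso.refl _) (fun a => rfl)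
    have heq : (fun a : α =>
        (((OrderIso.refl (Set.Icc (⊥:α) c)).symm ⟨(a ⊔ c') ⊓ c, bot_le, inf_le_right⟩ :
          Set.Icc (⊥:α) c) : α)) = fun a : α => (a ⊔ c') ⊓ c := by
      funext a; simp
    rwa [heq] at h
  set χ : α → α := (fun a : α => (a ⊔ c') ⊓ c) ∘ φ with hχdef
  have hχmem : χ ∈ M := hM.comp_mem _ hproj φ hφ
  have hχ : ∀ t, χ t = (φ t ⊔ c') ⊓ c := fun t => rfl
  have hχtop : χ ⊤ = c := by
    have h1 : φ ⊤ ⊔ c' = ⊤ := top_le_iff.mp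
      (hcompl.sup_eq_top ▸ sup_le_sup_right hcle c')
    rw [hχ, h1, top_inf_eq]
  obtain ⟨a, ha, e₂, he₂⟩ := hM.lin_mem χ hχmem
  let e₂' : Set.Icc a (⊤:α) ≃o Set.Icc (⊥:α) c :=
    e₂.trans (OrderIso.setCongr _ _ (by rw [hχtop]))
  have he₂' : ∀ v : Set.Icc a (⊤:α), ((e₂' v : Set.Icc (⊥:α) c) : α) = χ (v:α) :=
    fun v => he₂ v
  obtain ⟨a', hca⟩ := hd2 a c ⟨c', hcompl⟩ e₂' (by
    have heq : (fun b : α =>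
        ((e₂' ⟨a ⊔ b, le_sup_left, le_top⟩ : Set.Icc (⊥:α) c) : α)) = χ := by
      funext b
      rw [he₂' ⟨a ⊔ b, le_sup_left, le_top⟩]
      show χ (a ⊔ b) = χ b
      rw [ha b, sup_comm]
    rw [heq]; exact hχmem)
  have hca' : IsCompl a' a := hca.symm
  let E : Set.Icc (⊥:α) a' ≃o Set.Icc (⊥:α) c :=
    ((OrderIso.setCongr (Set.Icc (⊥:α) a') (Set.Icc (a' ⊓ a) a')
        (by rw [hca'.inf_eq_bot])).trans
      ((infIccOrderIsoIccSup a' a).trans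
        (OrderIso.setCongr (Set.Icc a (a' ⊔ a)) (Set.Icc a ⊤)
          (by rw [hca'.sup_eq_top])))).trans e₂'
  have hE : ∀ v : Set.Icc (⊥:α) a', ((E v : Set.Icc (⊥:α) c) : α) = χ (v:α) := by
    intro v
    have h1 : ((E v : Set.Icc (⊥:α) c) : α) = χ ((v:α) ⊔ a) :=
      he₂' ⟨(v:α) ⊔ a, le_sup_right, le_top⟩
    rw [h1, ← ha]
  have hψmem := hcc χ hχmem a' a c c' hca' hcompl E hE
  refine ⟨_, hψmem, x, ?_, ?_⟩
  · -- x is superfluous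
    intro y hy
    have h1 : x ⊔ (y ⊓ c') = c' := by
      rw [← sup_inf_assoc_of_le _ hxle, hy, top_inf_eq]
    have h2 : y ⊓ c' = c' := hsupin.2 _ inf_le_right h1
    have h3 : c' ≤ y := by rw [← h2]; exact inf_le_left
    have h4 : x ⊔ y ≤ y := sup_le (hxle.trans h3) le_rfl
    exact top_le_iff.mp (hy ▸ h4)
  · -- the congruence
    have htopeq : φ ⊤ = c ⊔ x := by
      have h1 : (c ⊔ c') ⊓ φ ⊤ = c ⊔ (c' ⊓ φ ⊤) := sup_inf_assoc_of_le _ hcle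
      rw [hcompl.sup_eq_top, top_inf_eq] at h1
      rw [h1, inf_comm]
    have hmod : ∀ u, u ≤ φ ⊤ → u ⊔ x = ((u ⊔ c') ⊓ c) ⊔ x := by
      intro u hu
      have hu' : u ≤ c ⊔ x := htopeq ▸ hu
      have s3 : c' ⊓ (c ⊔ x) = x := by
        rw [inf_comm, sup_comm c x, sup_inf_assoc_of_le _ hxle, hcompl.inf_eq_bot,
          sup_bot_eq]
      have s2 : (u ⊔ c') ⊓ (c ⊔ x) = u ⊔ x := by
        rw [sup_inf_assoc_of_le _ hu', s3]
      have s1 : ((u ⊔ c') ⊓ c) ⊔ x = (u ⊔ c') ⊓ (c ⊔ x) := calc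
        ((u ⊔ c') ⊓ c) ⊔ x = x ⊔ (c ⊓ (u ⊔ c')) := by
          rw [sup_comm ((u ⊔ c') ⊓ c) x, inf_comm (u ⊔ c') c]
        _ = (x ⊔ c) ⊓ (u ⊔ c') :=
          (sup_inf_assoc_of_le c (hxle.trans (le_sup_right : c' ≤ u ⊔ c'))).symm
        _ = (u ⊔ c') ⊓ (c ⊔ x) := by rw [inf_comm (x ⊔ c) (u ⊔ c'), sup_comm x c]
      rw [s1, s2]
    intro b
    set ψ : α → α := fun b : α =>
      ((E.symm ⟨(b ⊔ c') ⊓ c, bot_le, inf_le_right⟩ : Set.Icc (⊥:α) a') : α) with hψdef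
    have hkey : χ (ψ (φ b)) = (φ b ⊔ c') ⊓ c := by
      have h1 : ((E (E.symm ⟨(φ b ⊔ c') ⊓ c, bot_le, inf_le_right⟩) :
          Set.Icc (⊥:α) c) : α) = χ (ψ (φ b)) := hE _
      rw [← h1, E.apply_symm_apply]
    have h2 : φ (ψ (φ b)) ⊔ x = χ (ψ (φ b)) ⊔ x := hmod _ (himg _)
    have h3 : φ b ⊔ x = ((φ b ⊔ c') ⊓ c) ⊔ x := hmod _ (himg b)
    rw [h2, hkey, ← h3]
end
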